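/- If a family M̃ of matrices with joint spectral radius 1 admits an invariant norm (max_j ||Ã_j x|| = ||x|| for all x), and P is a convex body with Ã_j P ⊆ P for all j such that some product Π̃ of the Ã_j has spectral radius 1 with leading eigenvector v on the boundary of P, then for every eigenvector u of Π̃ not proportional to v with corresponding eigenvalue μ, if the one-dimensional (or two-dimensional, in the complex conjugate case) invariant subspace U spanned by u satisfies Π̃(P ∩ U) ⊂ int_U(P ∩ U), then |μ| < 1. -/
import Mathlib


/-- The product of length `k` of operators from the family `A`. -/
noncomputable def prodCLM {E : Type*} [NormedAddCommGroup E] [NormedSpace ℝ E] {m : ℕ}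
    (A : Fin m → E →L[ℝ] E) (k : ℕ) (w : Fin k → Fin m) : E →L[ℝ] E :=
  (List.ofFn fun i => A (w i)).prod


lemma intrinsicInterior_line
    {E : Type*} [NormedAddCommGroup E] [NormedSpace ℝ E]
    (s : Set E) (y : E) (hy : y ∈ intrinsicInterior ℝ s)
    (u : E) (hu : u ∈ (affineSpan ℝ s).direction) :
    ∃ δ : ℝ, 0 < δ ∧ y + δ • u ∈ s ∧ y - δ • u ∈ s := by
  obtain ⟨z, hz, rfl⟩ := hy
  haveI : Nonempty (affineSpan ℝ s) := ⟨z⟩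
  set g : ℝ → affineSpan ℝ s := fun t => (t • (⟨u, hu⟩ : (affineSpan ℝ s).direction)) +ᵥ z with hg
  have hgcoe : ∀ t : ℝ, (g t : E) = (z : E) + t • u := by
    intro t
    simp [hg, AffineSubspace.coe_vadd, add_comm]
  have hgc : Continuous g := by
    rw [continuous_induced_rng]
    have : (Subtype.val ∘ g : ℝ → E) = fun t => (z : E) + t • u := funext hgcoe
    rw [this]
    exact continuous_const.add (continuous_id.smul continuous_const)
  have h0 : g 0 = z := by
    apply Subtype.ext; rw [hgcoe]; simp
  have hopen : IsOpen (g ⁻¹' interior ((↑) ⁻¹' s : Set <| affineSpan ℝ s)) :=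
    isOpen_interior.preimage hgc
  have h0mem : (0 : ℝ) ∈ g ⁻¹' interior ((↑) ⁻¹' s) := by
    simp [h0, hz]
  obtain ⟨δ, hδ, hball⟩ := Metric.isOpen_iff.1 hopen 0 h0mem
  have h1 : g (δ / 2) ∈ interior ((↑) ⁻¹' s : Set <| affineSpan ℝ s) := by
    apply hball; simp [Real.ball_eq_Ioo]; constructor <;> linarith
  have h2 : g (-(δ / 2)) ∈ interior ((↑) ⁻¹' s : Set <| affineSpan ℝ s) := by
    apply hball; simp [Real.ball_eq_Ioo]; constructor <;> [linarith; linarith]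
  refine ⟨δ / 2, by linarith, ?_, ?_⟩
  · have h3 : ((g (δ/2) : E)) ∈ s := Set.mem_preimage.1 (interior_subset h1)
    rw [hgcoe] at h3
    exact h3
  · have := hgcoe (-(δ / 2))
    have h3 : ((g (-(δ/2)) : E)) ∈ s := Set.mem_preimage.1 (interior_subset h2)
    rw [hgcoe] at h3
    simpa [sub_eq_add_neg, neg_smul] using h3

/-- suppose the family `M̃` (of joint spectral radius `1`) admits an
invariant norm, `P` is an invariant convex body, `Π̃` is a product of the `Ã_j` with
`Π̃ v = v` and leading eigenvector `v` on the boundary of `P`.  If `u` is an eigenvector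
of `Π̃` not proportional to `v`, with eigenvalue `μ`, lying in an invariant subspace `U`,
and `Π̃` maps the section `P ∩ U` into its relative (intrinsic) interior, then `|μ| < 1`. -/
theorem strict_section_contraction_eigenvalue_lt_one
    {E : Type*} [NormedAddCommGroup E] [NormedSpace ℝ E] [FiniteDimensional ℝ E]
    {m : ℕ} (A : Fin m → E →L[ℝ] E)
    (h_invnorm : ∀ x : E, (⨆ j : Fin m, ‖A j x‖) = ‖x‖)
    (P : Set E) (hP_comp : IsCompact P) (hP_conv : Convex ℝ P)
    (hP_symm : ∀ x ∈ P, -x ∈ P) (hP_int : (interior P).Nonempty)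
    (hP_inv : ∀ j : Fin m, ∀ x ∈ P, A j x ∈ P)
    (Pi : E →L[ℝ] E) (hPi : ∃ k : ℕ, ∃ w : Fin k → Fin m, Pi = prodCLM A k w)
    (v : E) (hv0 : v ≠ 0) (hv : Pi v = v) (hv_bd : v ∈ frontier P)
    (u : E) (hu0 : u ≠ 0) (μ : ℝ) (hu : Pi u = μ • u)
    (h_uv : ∀ c : ℝ, u ≠ c • v)
    (U : Submodule ℝ E) (hUu : u ∈ U) (hU_inv : ∀ x ∈ U, Pi x ∈ U)
    (h_strict : ∀ x ∈ P ∩ (U : Set E), Pi x ∈ intrinsicInterior ℝ (P ∩ (U : Set E))) :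
    |μ| < 1 := by
  -- 0 is in the interior of P
  obtain ⟨x₀, hx₀⟩ := hP_int
  have h0int : (0 : E) ∈ interior P := by
    have h1 : -x₀ ∈ P := hP_symm x₀ (interior_subset hx₀)
    have := hP_conv.combo_interior_self_mem_interior hx₀ h1
      (by norm_num : (0:ℝ) < 1/2) (by norm_num : (0:ℝ) ≤ 1/2) (by norm_num)
    simpa using this
  have h0P : (0 : E) ∈ P := interior_subset h0int
  -- a positive multiple of u lies in P
  obtain ⟨ε, hε, hball⟩ := Metric.isOpen_iff.1 isOpen_interior 0 h0int
  have hun : 0 < ‖u‖ := norm_pos_iff.2 hu0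
  set t₀ : ℝ := ε / (2 * ‖u‖) with ht₀def
  have ht₀ : 0 < t₀ := by positivity
  have ht₀P : t₀ • u ∈ P := by
    apply interior_subset; apply hball
    rw [Metric.mem_ball, dist_zero_right, norm_smul, Real.norm_eq_abs,
      abs_of_pos ht₀, ht₀def, div_mul_eq_mul_div, div_lt_iff₀ (by positivity)]
    nlinarith [mul_pos hε hun]
  -- the set of admissible scalings
  set S : Set ℝ := {t : ℝ | 0 ≤ t ∧ t • u ∈ P} with hS
  have hSne : S.Nonempty := ⟨t₀, le_of_lt ht₀, ht₀P⟩
  obtain ⟨R, hR⟩ := hP_comp.isBounded.subset_ball 0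
  have hSbdd : BddAbove S := by
    refine ⟨R / ‖u‖ + 1, fun t ht => ?_⟩
    have h1 : ‖t • u‖ < R := by
      have := hR ht.2
      rwa [Metric.mem_ball, dist_zero_right] at this
    rw [norm_smul, Real.norm_eq_abs, abs_of_nonneg ht.1] at h1
    have h2 : t ≤ R / ‖u‖ := (le_div_iff₀ hun).2 h1.le
    linarith
  have hSclosed : IsClosed S := by
    have : S = Set.Ici (0:ℝ) ∩ (fun t : ℝ => t • u) ⁻¹' P := by
      ext t; simp [hS, Set.mem_setOf_eq, and_comm]
    rw [this]
    exact isClosed_Ici.inter (hP_comp.isClosed.preimage (continuous_id.smul continuous_const))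
  set T : ℝ := sSup S with hT
  have hTS : T ∈ S := hSclosed.csSup_mem hSne hSbdd
  have hTpos : 0 < T := lt_of_lt_of_le ht₀ (le_csSup hSbdd ⟨le_of_lt ht₀, ht₀P⟩)
  -- x = T • u is in P ∩ U
  have hxPU : T • u ∈ P ∩ (U : Set E) := ⟨hTS.2, U.smul_mem T hUu⟩
  have h0PU : (0 : E) ∈ P ∩ (U : Set E) := ⟨h0P, U.zero_mem⟩
  -- u is in the direction of the affine span of P ∩ U
  have hudir : u ∈ (affineSpan ℝ (P ∩ (U : Set E))).direction := by
    have h1 : T • u -ᵥ (0:E) ∈ (affineSpan ℝ (P ∩ (U : Set E))).direction :=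
      AffineSubspace.vsub_mem_direction (mem_affineSpan ℝ hxPU) (mem_affineSpan ℝ h0PU)
    have h2 : T • u -ᵥ (0:E) = T • u := by simp
    rw [h2] at h1
    have := (affineSpan ℝ (P ∩ (U : Set E))).direction.smul_mem T⁻¹ h1
    rwa [inv_smul_smul₀ (ne_of_gt hTpos)] at this
  -- apply strictness
  have hy : Pi (T • u) ∈ intrinsicInterior ℝ (P ∩ (U : Set E)) := h_strict _ hxPU
  have hPix : Pi (T • u) = (T * μ) • u := by
    rw [map_smul, hu, smul_smul]
  rw [hPix] at hy
  obtain ⟨δ, hδ, hmem₁, hmem₂⟩ := intrinsicInterior_line _ _ hy u hudir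
  have hplus : (T * μ + δ) • u ∈ P := by
    have := hmem₁.1
    rwa [← add_smul] at this
  have hminus : (T * μ - δ) • u ∈ P := by
    have := hmem₂.1
    rwa [← sub_smul] at this
  -- conclude: (|T * μ| + δ) • u ∈ P
  have hkey : (|T * μ| + δ) • u ∈ P := by
    rcases le_or_gt 0 (T * μ) with h | h
    · rwa [abs_of_nonneg h]
    · rw [abs_of_neg h]
      have := hP_symm _ hminus
      rw [← neg_smul] at this
      have h2 : -(T * μ - δ) = -(T * μ) + δ := by ring
      rwa [h2] at this
  have hle : |T * μ| + δ ≤ T := le_csSup hSbdd ⟨by positivity, hkey⟩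
  rw [abs_mul, abs_of_pos hTpos] at hle
  nlinarith [abs_nonneg μ]
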